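/- (Doubling of the degenerate measure.) Let d < n-1 and dm = |t|^{d+1-n}dX on ℝ^n. There is a constant C = C(n,d) ≥ 1 such that for every X ∈ ℝ^n and r > 0, m(B_{2r}(X)) ≤ C m(B_r(X)). Moreover m(B_r(X)) ≈ r^n δ(X)^{d+1-n} when δ(X) ≥ 2r and m(B_r(X)) ≈ r^{d+1} when δ(X) ≤ 2r, where δ(X) = dist(X, ℝ^d × {0}). -/

import Mathlib

open MeasureTheory Metric Real
open scoped ENNReal NNReal

noncomputable section

abbrev Ed (d : ℕ) : Type := EuclideanSpace ℝ (Fin d)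
abbrev Esp (d k : ℕ) : Type := EuclideanSpace ℝ (Fin (d + k))

def tpart {d k : ℕ} (X : Esp d k) : Ed k := WithLp.toLp 2 (fun j => X (Fin.natAdd d j))
def glue {d k : ℕ} (x : Ed d) (t : Ed k) : Esp d k :=
  WithLp.toLp 2 (fun i => Fin.addCases (fun i => x i) (fun j => t j) i : Fin (d + k) → ℝ)
def wgt (d k : ℕ) (X : Esp d k) : ℝ := ‖tpart X‖ ^ ((d : ℝ) + 1 - ((d + k : ℕ) : ℝ))

/-- The degenerate measure `m(E) = ∫_E |t|^{d+1-n} dX`. -/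
def mm (d k : ℕ) (S : Set (Esp d k)) : ℝ≥0∞ :=
  ∫⁻ X in S, ENNReal.ofReal (wgt d k X)

/-! Auxiliary definitions and lemmas. -/

def xpart {d k : ℕ} (X : Esp d k) : Ed d := WithLp.toLp 2 (fun i => X (Fin.castAdd k i))

def exx (d k : ℕ) : ℝ := (d : ℝ) + 1 - ((d + k : ℕ) : ℝ)

lemma wgt_eq (d k : ℕ) (X : Esp d k) : wgt d k X = ‖tpart X‖ ^ exx d k := rfl

lemma exx_eq (d k : ℕ) : exx d k = 1 - (k : ℝ) := by unfold exx; push_cast; ring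

lemma exx_nonpos (d k : ℕ) (hk : 1 ≤ k) : exx d k ≤ 0 := by
  rw [exx_eq]; have : (1:ℝ) ≤ k := by exact_mod_cast hk
  linarith

lemma exx_add (d k : ℕ) : ((d + k : ℕ) : ℝ) + exx d k = (d : ℝ) + 1 := by
  unfold exx; ring

lemma dist_tpart_le {d k : ℕ} (X Y : Esp d k) : dist (tpart X) (tpart Y) ≤ dist X Y := by
  rw [EuclideanSpace.dist_eq, EuclideanSpace.dist_eq]
  apply Real.sqrt_le_sqrt
  rw [Fin.sum_univ_add (f := fun i => dist (X i) (Y i) ^ 2)]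
  have h1 : (0:ℝ) ≤ ∑ i : Fin d, dist (X (Fin.castAdd k i)) (Y (Fin.castAdd k i)) ^ 2 :=
    Finset.sum_nonneg fun i _ => sq_nonneg _
  have h2 : ∑ j : Fin k, dist (tpart X j) (tpart Y j) ^ 2
      = ∑ j : Fin k, dist (X (Fin.natAdd d j)) (Y (Fin.natAdd d j)) ^ 2 := rfl
  rw [h2]; linarith

lemma dist_xpart_le {d k : ℕ} (X Y : Esp d k) : dist (xpart X) (xpart Y) ≤ dist X Y := by
  rw [EuclideanSpace.dist_eq, EuclideanSpace.dist_eq]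
  apply Real.sqrt_le_sqrt
  rw [Fin.sum_univ_add (f := fun i => dist (X i) (Y i) ^ 2)]
  have h1 : (0:ℝ) ≤ ∑ j : Fin k, dist (X (Fin.natAdd d j)) (Y (Fin.natAdd d j)) ^ 2 :=
    Finset.sum_nonneg fun i _ => sq_nonneg _
  have h2 : ∑ i : Fin d, dist (xpart X i) (xpart Y i) ^ 2
      = ∑ i : Fin d, dist (X (Fin.castAdd k i)) (Y (Fin.castAdd k i)) ^ 2 := rfl
  rw [h2]; linarith

lemma norm_tpart_le {d k : ℕ} (X Y : Esp d k) : ‖tpart Y‖ ≤ ‖tpart X‖ + dist X Y := by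
  have h1 := abs_norm_sub_norm_le (tpart Y) (tpart X)
  have h2 : ‖tpart Y - tpart X‖ = dist (tpart Y) (tpart X) := (dist_eq_norm _ _).symm
  have h3 := dist_tpart_le Y X
  rw [dist_comm Y X] at h3
  have h4 := abs_le.mp h1
  linarith [h4.2]

lemma norm_tpart_ge {d k : ℕ} (X Y : Esp d k) : ‖tpart X‖ - dist X Y ≤ ‖tpart Y‖ := by
  have h := norm_tpart_le Y X
  rw [dist_comm Y X] at h
  linarith

lemma vol_ball_esp (d k : ℕ) (X : Esp d k) {r : ℝ} (hr : 0 < r) :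
    volume (ball X r) = ENNReal.ofReal (r ^ (d + k)) * volume (ball (0 : Esp d k) 1) := by
  rw [Measure.addHaar_ball_of_pos volume _ hr, finrank_euclideanSpace_fin]

lemma vol_ball_ed (m : ℕ) (x : Ed m) {r : ℝ} (hr : 0 < r) :
    volume (ball x r) = ENNReal.ofReal (r ^ m) * volume (ball (0 : Ed m) 1) := by
  rw [Measure.addHaar_ball_of_pos volume _ hr, finrank_euclideanSpace_fin]

lemma volB1_pos (d k : ℕ) : 0 < volume (ball (0 : Esp d k) 1) := measure_ball_pos _ _ one_pos
lemma volB1_ne_top (d k : ℕ) : volume (ball (0 : Esp d k) 1) ≠ ⊤ := measure_ball_lt_top.ne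
lemma volB1d_ne_top (m : ℕ) : volume (ball (0 : Ed m) 1) ≠ ⊤ := measure_ball_lt_top.ne

lemma mm_mono (d k : ℕ) {s t : Set (Esp d k)} (h : s ⊆ t) : mm d k s ≤ mm d k t :=
  lintegral_mono' (Measure.restrict_mono h le_rfl) le_rfl

/-! The splitting of the space into a product. -/

def splitE (d k : ℕ) : Esp d k ≃ᵐ (Ed d × Ed k) :=
  (MeasurableEquiv.toLp 2 (Fin (d+k) → ℝ)).symm.trans <|
  ((MeasurableEquiv.piCongrLeft (fun _ => ℝ) finSumFinEquiv).symm).trans <|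
  (MeasurableEquiv.sumPiEquivProdPi (fun _ => ℝ)).trans <|
  ((MeasurableEquiv.toLp 2 (Fin d → ℝ)).prodCongr
    (MeasurableEquiv.toLp 2 (Fin k → ℝ)))

lemma splitE_apply {d k : ℕ} (Y : Esp d k) : splitE d k Y = (xpart Y, tpart Y) := by
  unfold splitE
  ext j
  · simp [MeasurableEquiv.trans, MeasurableEquiv.prodCongr, MeasurableEquiv.sumPiEquivProdPi,
      MeasurableEquiv.piCongrLeft, MeasurableEquiv.toLp, xpart]
    rfl
  · simp [MeasurableEquiv.trans, MeasurableEquiv.prodCongr, MeasurableEquiv.sumPiEquivProdPi,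
      MeasurableEquiv.piCongrLeft, MeasurableEquiv.toLp, tpart]
    rfl

lemma splitE_mp (d k : ℕ) : MeasurePreserving (splitE d k) volume volume := by
  unfold splitE
  have h1 := EuclideanSpace.volume_preserving_symm_measurableEquiv_toLp (Fin (d+k))
  have h2 := (volume_measurePreserving_piCongrLeft (fun _ : Fin (d+k) => ℝ) finSumFinEquiv).symm
    (MeasurableEquiv.piCongrLeft (fun _ => ℝ) finSumFinEquiv)
  have h3 := volume_measurePreserving_sumPiEquivProdPi (fun _ : Fin d ⊕ Fin k => ℝ)
  have h4a := (EuclideanSpace.volume_preserving_symm_measurableEquiv_toLp (Fin d)).symm _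
  have h4b := (EuclideanSpace.volume_preserving_symm_measurableEquiv_toLp (Fin k)).symm _
  have h4 : MeasurePreserving
      ((MeasurableEquiv.toLp 2 (Fin d → ℝ)).prodCongr
        (MeasurableEquiv.toLp 2 (Fin k → ℝ))) volume volume := by
    have := h4a.prod h4b
    rw [← Measure.volume_eq_prod, ← Measure.volume_eq_prod] at this
    exact this
  exact ((h1.trans h2).trans h3).trans h4

lemma gmeas (d k : ℕ) : Measurable (fun t : Ed k => ENNReal.ofReal (‖t‖ ^ exx d k)) := by
  fun_prop

lemma mm_cyl (d k : ℕ) {A : Set (Ed d)} {B : Set (Ed k)} (hA : MeasurableSet A)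
    (hB : MeasurableSet B) :
    mm d k (splitE d k ⁻¹' (A ×ˢ B))
      = volume A * ∫⁻ t in B, ENNReal.ofReal (‖t‖ ^ exx d k) := by
  have key : mm d k (splitE d k ⁻¹' (A ×ˢ B))
      = ∫⁻ p in A ×ˢ B, ENNReal.ofReal (‖p.2‖ ^ exx d k) := by
    rw [mm, ← (splitE_mp d k).setLIntegral_comp_preimage_emb
      (splitE d k).measurableEmbedding (fun p => ENNReal.ofReal (‖p.2‖ ^ exx d k)) (A ×ˢ B)]
    congr 1
  have hf : AEMeasurable (fun p : Ed d × Ed k => ENNReal.ofReal (‖p.2‖ ^ exx d k))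
      ((volume.restrict A).prod (volume.restrict B)) := by fun_prop
  rw [key, Measure.volume_eq_prod, ← Measure.prod_restrict _ _, lintegral_prod _ hf]
  simp [lintegral_const, Measure.restrict_apply_univ]
  ring

/-! The one-dimensional-in-`t` integral estimate, via dyadic annuli. -/

lemma key_real (d k : ℕ) (hk : 1 ≤ k) {R : ℝ} (hR : 0 < R) (j : ℕ) :
    (R * (1/2:ℝ)^(j+1)) ^ exx d k * (R * (1/2:ℝ)^j) ^ k ≤ 2^k * R * (1/2:ℝ)^j := by
  have hb : R * (1/2:ℝ)^j = 2 * (R * (1/2:ℝ)^(j+1)) := by ring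
  rw [hb]
  have ha' : 0 < R * (1/2:ℝ)^(j+1) := by positivity
  generalize hA : R * (1/2:ℝ)^(j+1) = a at ha' ⊢
  rw [exx_eq, Real.rpow_sub ha', Real.rpow_one, Real.rpow_natCast, mul_pow]
  have hak : (0:ℝ) < a ^ k := by positivity
  have he : a / a ^ k * (2 ^ k * a ^ k) = 2 ^ k * a := by field_simp
  rw [he]
  nlinarith [pow_pos (show (0:ℝ) < 2 by norm_num) k]

lemma tsum_half : ∑' j : ℕ, ENNReal.ofReal ((1/2:ℝ)^j) = 2 := by
  have h : ∀ j : ℕ, ENNReal.ofReal ((1/2:ℝ)^j) = (2⁻¹ : ℝ≥0∞) ^ j := by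
    intro j
    rw [ENNReal.ofReal_pow (by norm_num), show (1/2:ℝ) = 2⁻¹ from by norm_num,
      ENNReal.ofReal_inv_of_pos two_pos]
    norm_num
  simp_rw [h, ENNReal.tsum_geometric, ENNReal.one_sub_inv_two, inv_inv]

lemma I_le (d k : ℕ) (hk : 2 ≤ k) :
    ∃ c : ℝ≥0∞, c ≠ ⊤ ∧ ∀ R : ℝ, 0 < R →
      ∫⁻ t in ball (0 : Ed k) R, ENNReal.ofReal (‖t‖ ^ exx d k)
        ≤ c * ENNReal.ofReal R := by
  haveI : Nontrivial (Ed k) :=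
    ⟨⟨EuclideanSpace.single (⟨0, by omega⟩ : Fin k) (1:ℝ), 0, by
      intro h
      have := congrArg (fun f => f (⟨0, by omega⟩ : Fin k)) h
      simpa [EuclideanSpace.single_apply] using this⟩⟩
  set v := volume (ball (0 : Ed k) 1) with hv
  refine ⟨ENNReal.ofReal (2^k) * v * 2, ?_, ?_⟩
  · exact ENNReal.mul_ne_top (ENNReal.mul_ne_top ENNReal.ofReal_ne_top
      measure_ball_lt_top.ne) (by norm_num)
  intro R hR
  set A : ℕ → Set (Ed k) := fun j => ball 0 (R * (1/2)^j) \ ball 0 (R * (1/2)^(j+1)) with hA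
  have hcover : ball (0 : Ed k) R ⊆ {0} ∪ ⋃ j, A j := by
    intro t ht
    rw [mem_ball_zero_iff] at ht
    rcases eq_or_ne t 0 with rfl | htne
    · exact Or.inl rfl
    have hx : 0 < ‖t‖ := norm_pos_iff.mpr htne
    have hex : ∃ n : ℕ, R * (1/2:ℝ)^(n+1) ≤ ‖t‖ := by
      obtain ⟨n, hn⟩ := exists_pow_lt_of_lt_one (div_pos hx hR) (by norm_num : (1/2:ℝ) < 1)
      refine ⟨n, ?_⟩
      rw [lt_div_iff₀ hR] at hn
      have hpn : (0:ℝ) ≤ (1/2:ℝ)^n := by positivity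
      have hps : (1/2:ℝ)^(n+1) = (1/2:ℝ)^n * (1/2) := pow_succ _ _
      nlinarith
    set j := Nat.find hex with hj_def
    have hj1 : R * (1/2:ℝ)^(j+1) ≤ ‖t‖ := Nat.find_spec hex
    have hj2 : ‖t‖ < R * (1/2:ℝ)^j := by
      rcases Nat.eq_zero_or_pos j with hj0 | hjp
      · rw [hj0]; simpa using ht
      · have h6 : ‖t‖ < R * (1/2:ℝ)^(j-1+1) :=
          lt_of_not_ge (by simpa using Nat.find_min hex (by omega : j - 1 < j))
        have hjj : j - 1 + 1 = j := by omega
        rwa [hjj] at h6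
    refine Or.inr (Set.mem_iUnion.mpr ⟨j, ?_⟩)
    constructor
    · exact mem_ball_zero_iff.mpr hj2
    · rw [mem_ball_zero_iff]; push_neg; exact hj1
  have hmeasA : ∀ j, MeasurableSet (A j) := fun j => measurableSet_ball.diff measurableSet_ball
  have hterm : ∀ j : ℕ, ∫⁻ t in A j, ENNReal.ofReal (‖t‖ ^ exx d k)
      ≤ ENNReal.ofReal (2^k * R * (1/2:ℝ)^j) * v := by
    intro j
    have hpos : 0 < R * (1/2:ℝ)^(j+1) := by positivity
    have hpt : ∀ t ∈ A j, ENNReal.ofReal (‖t‖ ^ exx d k)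
        ≤ ENNReal.ofReal ((R * (1/2:ℝ)^(j+1)) ^ exx d k) := by
      intro t htj
      apply ENNReal.ofReal_le_ofReal
      apply Real.rpow_le_rpow_of_nonpos hpos ?_ (exx_nonpos d k (by omega))
      have h5 : t ∉ ball (0:Ed k) (R * (1/2:ℝ)^(j+1)) := htj.2
      simpa [mem_ball_zero_iff, not_lt] using h5
    calc ∫⁻ t in A j, ENNReal.ofReal (‖t‖ ^ exx d k)
        ≤ ∫⁻ _ in A j, ENNReal.ofReal ((R * (1/2:ℝ)^(j+1)) ^ exx d k) :=
          setLIntegral_mono' (hmeasA j) hpt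
      _ = ENNReal.ofReal ((R * (1/2:ℝ)^(j+1)) ^ exx d k) * volume (A j) :=
          setLIntegral_const _ _
      _ ≤ ENNReal.ofReal ((R * (1/2:ℝ)^(j+1)) ^ exx d k)
            * (ENNReal.ofReal ((R*(1/2:ℝ)^j)^k) * v) := by
          gcongr
          rw [hv, ← vol_ball_ed k 0 (by positivity : 0 < R * (1/2:ℝ)^j)]
          exact measure_mono Set.diff_subset
      _ = ENNReal.ofReal ((R * (1/2:ℝ)^(j+1)) ^ exx d k * (R*(1/2:ℝ)^j)^k) * v := by
          rw [← mul_assoc, ← ENNReal.ofReal_mul (Real.rpow_nonneg hpos.le _)]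
      _ ≤ ENNReal.ofReal (2^k * R * (1/2:ℝ)^j) * v :=
          mul_le_mul_left (ENNReal.ofReal_le_ofReal (key_real d k (by omega) hR j)) v
  have hsplit : ∀ j:ℕ, ENNReal.ofReal (2^k * R * (1/2:ℝ)^j) * v
      = (ENNReal.ofReal (2^k) * v * ENNReal.ofReal R) * ENNReal.ofReal ((1/2:ℝ)^j) := by
    intro j
    rw [ENNReal.ofReal_mul (by positivity), ENNReal.ofReal_mul (by positivity)]
    ring
  calc ∫⁻ t in ball (0:Ed k) R, ENNReal.ofReal (‖t‖ ^ exx d k)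
      ≤ ∫⁻ t in ({0} ∪ ⋃ j, A j : Set (Ed k)), ENNReal.ofReal (‖t‖ ^ exx d k) :=
        lintegral_mono' (Measure.restrict_mono hcover le_rfl) le_rfl
    _ ≤ (∫⁻ t in ({0} : Set (Ed k)), ENNReal.ofReal (‖t‖ ^ exx d k))
          + ∫⁻ t in (⋃ j, A j), ENNReal.ofReal (‖t‖ ^ exx d k) :=
        lintegral_union_le _ _ _
    _ = ∫⁻ t in (⋃ j, A j), ENNReal.ofReal (‖t‖ ^ exx d k) := by
        rw [setLIntegral_measure_zero _ _ (measure_singleton 0), zero_add]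
    _ ≤ ∑' j, ∫⁻ t in A j, ENNReal.ofReal (‖t‖ ^ exx d k) := lintegral_iUnion_le _ _
    _ ≤ ∑' j, ENNReal.ofReal (2^k * R * (1/2:ℝ)^j) * v := ENNReal.tsum_le_tsum hterm
    _ = ENNReal.ofReal (2^k) * v * 2 * ENNReal.ofReal R := by
        simp_rw [hsplit]
        rw [ENNReal.tsum_mul_left, tsum_half]
        ring

/-! The four regime estimates. -/

lemma far_up (d k : ℕ) (hk : 1 ≤ k) (X : Esp d k) {r : ℝ} (hr : 0 < r)
    (h2 : 2*r ≤ ‖tpart X‖) :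
    mm d k (ball X r) ≤ (ENNReal.ofReal ((2:ℝ) ^ (k:ℝ)) * volume (ball (0:Esp d k) 1))
      * ENNReal.ofReal (r ^ ((d+k:ℕ):ℝ) * ‖tpart X‖ ^ exx d k) := by
  set δ := ‖tpart X‖ with hδdef
  have hδ : 0 < δ := lt_of_lt_of_le (by linarith) h2
  have hhalf : 0 < δ/2 := by linarith
  have hpt : ∀ Y ∈ ball X r, ENNReal.ofReal (wgt d k Y)
      ≤ ENNReal.ofReal ((δ/2) ^ exx d k) := by
    intro Y hY
    apply ENNReal.ofReal_le_ofReal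
    rw [wgt_eq]
    have hd : dist X Y < r := by rw [dist_comm]; exact mem_ball.mp hY
    have h3 : δ/2 ≤ ‖tpart Y‖ := by
      have := norm_tpart_ge X Y
      linarith
    exact Real.rpow_le_rpow_of_nonpos hhalf h3 (exx_nonpos d k hk)
  have hkey : (δ/2) ^ exx d k * r ^ (d+k)
      ≤ (2:ℝ)^(k:ℝ) * (r ^ ((d+k:ℕ):ℝ) * δ ^ exx d k) := by
    have h1 : (δ/2) ^ exx d k = δ ^ exx d k * ((1:ℝ)/2) ^ exx d k := by
      rw [show δ/2 = δ * (1/2) by ring, Real.mul_rpow hδ.le (by norm_num)]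
    have h2' : ((1:ℝ)/2) ^ exx d k = (2:ℝ) ^ (-exx d k) := by
      rw [one_div, Real.inv_rpow (by norm_num : (0:ℝ) ≤ 2),
        ← Real.rpow_neg (by norm_num : (0:ℝ) ≤ 2)]
    have h3 : (2:ℝ) ^ (-exx d k) ≤ (2:ℝ) ^ (k:ℝ) := by
      apply Real.rpow_le_rpow_of_exponent_le one_le_two
      rw [exx_eq]; linarith
    have h4 : 0 < δ ^ exx d k := Real.rpow_pos_of_pos hδ _
    have h5 : r ^ (d+k) = r ^ ((d+k:ℕ):ℝ) := (Real.rpow_natCast r (d+k)).symm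
    have h6 : 0 < r ^ ((d+k:ℕ):ℝ) := Real.rpow_pos_of_pos hr _
    rw [h1, h2', h5]
    have h7 := mul_le_mul_of_nonneg_right (mul_le_mul_of_nonneg_left h3 h4.le) h6.le
    nlinarith [h7]
  calc mm d k (ball X r)
      ≤ ∫⁻ _ in ball X r, ENNReal.ofReal ((δ/2) ^ exx d k) :=
        setLIntegral_mono' measurableSet_ball hpt
    _ = ENNReal.ofReal ((δ/2) ^ exx d k) * volume (ball X r) := setLIntegral_const _ _
    _ = ENNReal.ofReal ((δ/2) ^ exx d k)
          * (ENNReal.ofReal (r ^ (d+k)) * volume (ball (0:Esp d k) 1)) := by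
        rw [vol_ball_esp d k X hr]
    _ = ENNReal.ofReal ((δ/2) ^ exx d k * r ^ (d+k)) * volume (ball (0:Esp d k) 1) := by
        rw [ENNReal.ofReal_mul (Real.rpow_nonneg hhalf.le _), mul_assoc]
    _ ≤ ENNReal.ofReal ((2:ℝ)^(k:ℝ) * (r ^ ((d+k:ℕ):ℝ) * δ ^ exx d k))
          * volume (ball (0:Esp d k) 1) :=
        mul_le_mul_left (ENNReal.ofReal_le_ofReal hkey) _
    _ = (ENNReal.ofReal ((2:ℝ) ^ (k:ℝ)) * volume (ball (0:Esp d k) 1))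
          * ENNReal.ofReal (r ^ ((d+k:ℕ):ℝ) * δ ^ exx d k) := by
        rw [ENNReal.ofReal_mul (by positivity)]
        ring

lemma far_low (d k : ℕ) (hk : 1 ≤ k) (X : Esp d k) {r : ℝ} (hr : 0 < r)
    (h2 : 2*r ≤ ‖tpart X‖) :
    (ENNReal.ofReal (((3:ℝ)/2) ^ exx d k) * volume (ball (0:Esp d k) 1))
      * ENNReal.ofReal (r ^ ((d+k:ℕ):ℝ) * ‖tpart X‖ ^ exx d k) ≤ mm d k (ball X r) := by
  set δ := ‖tpart X‖ with hδdef
  have hδ : 0 < δ := lt_of_lt_of_le (by linarith) h2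
  have hpt : ∀ Y ∈ ball X r, ENNReal.ofReal ((3/2*δ) ^ exx d k)
      ≤ ENNReal.ofReal (wgt d k Y) := by
    intro Y hY
    apply ENNReal.ofReal_le_ofReal
    rw [wgt_eq]
    have hd : dist X Y < r := by rw [dist_comm]; exact mem_ball.mp hY
    have h3 : 0 < ‖tpart Y‖ := by
      have := norm_tpart_ge X Y
      linarith
    have h4 : ‖tpart Y‖ ≤ 3/2*δ := by
      have := norm_tpart_le X Y
      linarith
    exact Real.rpow_le_rpow_of_nonpos h3 h4 (exx_nonpos d k hk)
  have hlow : ENNReal.ofReal ((3/2*δ) ^ exx d k) * volume (ball X r) ≤ mm d k (ball X r) := by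
    rw [← setLIntegral_const (ball X r) _]
    exact setLIntegral_mono' measurableSet_ball hpt
  have heq : ENNReal.ofReal ((3/2*δ) ^ exx d k) * volume (ball X r)
      = (ENNReal.ofReal (((3:ℝ)/2) ^ exx d k) * volume (ball (0:Esp d k) 1))
        * ENNReal.ofReal (r ^ ((d+k:ℕ):ℝ) * δ ^ exx d k) := by
    rw [vol_ball_esp d k X hr]
    have h5 : r ^ (d+k) = r ^ ((d+k:ℕ):ℝ) := (Real.rpow_natCast r (d+k)).symm
    have h6 : ((3:ℝ)/2*δ) ^ exx d k = (3/2:ℝ) ^ exx d k * δ ^ exx d k :=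
      Real.mul_rpow (by norm_num) hδ.le
    rw [h5, h6, ENNReal.ofReal_mul (Real.rpow_nonneg (by norm_num) _),
      ENNReal.ofReal_mul (Real.rpow_nonneg (by positivity) _)]
    ring
  rw [← heq]
  exact hlow

def tL (d k : ℕ) : Esp d k →ₗ[ℝ] Ed k where
  toFun := tpart
  map_add' := fun _ _ => rfl
  map_smul' := fun _ _ => rfl

lemma vol_tzero (d k : ℕ) (hk : 1 ≤ k) :
    volume {Y : Esp d k | tpart Y = 0} = 0 := by
  have h : {Y : Esp d k | tpart Y = 0} = (LinearMap.ker (tL d k) : Set (Esp d k)) := by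
    ext Y
    simp [LinearMap.mem_ker, tL]
    exact Iff.rfl
  rw [h]
  apply Measure.addHaar_submodule
  intro htop
  have h1 : (WithLp.toLp 2 (fun _ => (1:ℝ)) : Esp d k) ∈ LinearMap.ker (tL d k) := htop ▸ trivial
  have h2 : tpart (WithLp.toLp 2 (fun _ => (1:ℝ)) : Esp d k) = 0 := h1
  have h3 := congrArg (fun f => f (⟨0, by omega⟩ : Fin k)) h2
  simpa [tpart] using h3

lemma near_low (d k : ℕ) (hk : 1 ≤ k) (X : Esp d k) {r : ℝ} (hr : 0 < r)
    (h2 : ‖tpart X‖ ≤ 2*r) :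
    (ENNReal.ofReal ((3:ℝ) ^ exx d k) * volume (ball (0:Esp d k) 1))
      * ENNReal.ofReal (r ^ ((d:ℝ)+1)) ≤ mm d k (ball X r) := by
  set N : Set (Esp d k) := {Y : Esp d k | tpart Y = 0} with hN
  have hNmeas : MeasurableSet N := by
    have hmt : Measurable (tpart : Esp d k → Ed k) :=
      (LinearMap.continuous_of_finiteDimensional (tL d k)).measurable
    exact hmt (MeasurableSet.singleton 0)
  have h3r : 0 < 3*r := by linarith
  have hpt : ∀ Y ∈ ball X r \ N, ENNReal.ofReal ((3*r) ^ exx d k)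
      ≤ ENNReal.ofReal (wgt d k Y) := by
    intro Y hY
    apply ENNReal.ofReal_le_ofReal
    rw [wgt_eq]
    have hd : dist X Y < r := by rw [dist_comm]; exact mem_ball.mp hY.1
    have h3 : 0 < ‖tpart Y‖ := by
      rw [norm_pos_iff]
      exact hY.2
    have h4 : ‖tpart Y‖ ≤ 3*r := by
      have := norm_tpart_le X Y
      linarith
    exact Real.rpow_le_rpow_of_nonpos h3 h4 (exx_nonpos d k hk)
  have hlow : ENNReal.ofReal ((3*r) ^ exx d k) * volume (ball X r) ≤ mm d k (ball X r) := by
    have hstep : ENNReal.ofReal ((3*r) ^ exx d k) * volume (ball X r \ N)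
        ≤ ∫⁻ Y in ball X r \ N, ENNReal.ofReal (wgt d k Y) := by
      rw [← setLIntegral_const (ball X r \ N) _]
      exact setLIntegral_mono' (measurableSet_ball.diff hNmeas) hpt
    have hvol : volume (ball X r \ N) = volume (ball X r) :=
      measure_diff_null (vol_tzero d k hk)
    rw [hvol] at hstep
    refine le_trans hstep ?_
    exact lintegral_mono' (Measure.restrict_mono Set.diff_subset le_rfl) le_rfl
  have heq : ENNReal.ofReal ((3*r) ^ exx d k) * volume (ball X r)
      = (ENNReal.ofReal ((3:ℝ) ^ exx d k) * volume (ball (0:Esp d k) 1))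
        * ENNReal.ofReal (r ^ ((d:ℝ)+1)) := by
    rw [vol_ball_esp d k X hr]
    have h5 : (r:ℝ) ^ (d+k) = r ^ ((d+k:ℕ):ℝ) := (Real.rpow_natCast r (d+k)).symm
    have h6 : ((3:ℝ)*r) ^ exx d k = (3:ℝ) ^ exx d k * r ^ exx d k :=
      Real.mul_rpow (by norm_num) hr.le
    have h7 : r ^ exx d k * r ^ ((d+k:ℕ):ℝ) = r ^ ((d:ℝ)+1) := by
      rw [← Real.rpow_add hr, ← exx_add d k]
      ring_nf
    have hreal : ((3:ℝ)*r) ^ exx d k * r ^ (d+k) = (3:ℝ) ^ exx d k * r ^ ((d:ℝ)+1) := by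
      rw [h6, h5, mul_assoc, h7]
    rw [← mul_assoc, ← ENNReal.ofReal_mul (Real.rpow_nonneg (by positivity) _), hreal,
      ENNReal.ofReal_mul (Real.rpow_nonneg (by norm_num) _)]
    ring
  rw [← heq]
  exact hlow

lemma near_up (d k : ℕ) (hk : 2 ≤ k) :
    ∃ c : ℝ≥0∞, c ≠ ⊤ ∧ ∀ (X : Esp d k) (r : ℝ), 0 < r → ‖tpart X‖ ≤ 2*r →
      mm d k (ball X r) ≤ c * ENNReal.ofReal (r ^ ((d:ℝ)+1)) := by
  obtain ⟨cI, hcI, hI⟩ := I_le d k hk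
  refine ⟨volume (ball (0:Ed d) 1) * cI * ENNReal.ofReal 3, ?_, ?_⟩
  · exact ENNReal.mul_ne_top (ENNReal.mul_ne_top (volB1d_ne_top d) hcI) ENNReal.ofReal_ne_top
  intro X r hr h2
  have h3r : 0 < 3*r := by linarith
  have hsub : ball X r ⊆ splitE d k ⁻¹' ((ball (xpart X) r) ×ˢ (ball (0:Ed k) (3*r))) := by
    intro Y hY
    have hd : dist Y X < r := mem_ball.mp hY
    rw [Set.mem_preimage, splitE_apply, Set.mem_prod]
    constructor
    · rw [mem_ball]
      exact lt_of_le_of_lt (dist_xpart_le Y X) hd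
    · rw [mem_ball_zero_iff]
      have := norm_tpart_le X Y
      rw [dist_comm X Y] at this
      linarith
  calc mm d k (ball X r)
      ≤ mm d k (splitE d k ⁻¹' ((ball (xpart X) r) ×ˢ (ball (0:Ed k) (3*r)))) :=
        mm_mono d k hsub
    _ = volume (ball (xpart X) r) * ∫⁻ t in ball (0:Ed k) (3*r),
          ENNReal.ofReal (‖t‖ ^ exx d k) := mm_cyl d k measurableSet_ball measurableSet_ball
    _ ≤ (ENNReal.ofReal (r ^ d) * volume (ball (0:Ed d) 1)) * (cI * ENNReal.ofReal (3*r)) := by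
        apply mul_le_mul'
        · rw [vol_ball_ed d (xpart X) hr]
        · exact hI (3*r) h3r
    _ = volume (ball (0:Ed d) 1) * cI * (ENNReal.ofReal (r ^ d) * ENNReal.ofReal (3*r)) := by
        ring
    _ = volume (ball (0:Ed d) 1) * cI * ENNReal.ofReal 3 * ENNReal.ofReal (r ^ ((d:ℝ)+1)) := by
        rw [← ENNReal.ofReal_mul (by positivity)]
        have h8 : (r:ℝ) ^ d * (3*r) = 3 * r ^ ((d:ℝ)+1) := by
          rw [show ((d:ℝ)+1) = ((d+1:ℕ):ℝ) by push_cast; ring, Real.rpow_natCast]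
          ring
        rw [h8, ENNReal.ofReal_mul (by norm_num)]
        ring


lemma inv_trick {a E M : ℝ≥0∞} (ha0 : a ≠ 0) (haT : a ≠ ⊤) (h : a * E ≤ M) :
    E ≤ a⁻¹ * M := by
  calc E = a⁻¹ * (a * E) := by rw [← mul_assoc, ENNReal.inv_mul_cancel ha0 haT, one_mul]
    _ ≤ a⁻¹ * M := mul_le_mul_right h _

/-- the measure `dm = |t|^{d+1-n}dX` is doubling, with
`m(B_r(X)) ≈ rⁿ δ(X)^{d+1-n}` when `δ(X) ≥ 2r` and `m(B_r(X)) ≈ r^{d+1}` when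
`δ(X) ≤ 2r`, where `δ(X) = dist(X, ℝᵈ × {0}) = |t(X)|`. -/
theorem degenerate_measure_doubling (d k : ℕ) (hd : 0 < d) (hk : 2 ≤ k) :
    ∃ C : ℝ≥0∞, 1 ≤ C ∧ C ≠ ⊤ ∧
      ∀ (X : Esp d k) (r : ℝ), 0 < r →
        (mm d k (ball X (2 * r)) ≤ C * mm d k (ball X r)) ∧
        (2 * r ≤ ‖tpart X‖ →
          mm d k (ball X r)
              ≤ C * ENNReal.ofReal
                  (r ^ ((d + k : ℕ) : ℝ) * ‖tpart X‖ ^ ((d : ℝ) + 1 - ((d + k : ℕ) : ℝ))) ∧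
          ENNReal.ofReal
              (r ^ ((d + k : ℕ) : ℝ) * ‖tpart X‖ ^ ((d : ℝ) + 1 - ((d + k : ℕ) : ℝ)))
            ≤ C * mm d k (ball X r)) ∧
        (‖tpart X‖ ≤ 2 * r →
          mm d k (ball X r) ≤ C * ENNReal.ofReal (r ^ ((d : ℝ) + 1)) ∧
          ENNReal.ofReal (r ^ ((d : ℝ) + 1)) ≤ C * mm d k (ball X r)) := by
  have hk1 : 1 ≤ k := by omega
  obtain ⟨c3, hc3T, hnear⟩ := near_up d k hk
  set V := volume (ball (0:Esp d k) 1) with hV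
  set c1 : ℝ≥0∞ := ENNReal.ofReal ((2:ℝ)^(k:ℝ)) * V with hc1
  set a2 : ℝ≥0∞ := ENNReal.ofReal (((3:ℝ)/2) ^ exx d k) * V with ha2
  set a4 : ℝ≥0∞ := ENNReal.ofReal ((3:ℝ) ^ exx d k) * V with ha4
  have ha2_0 : a2 ≠ 0 := mul_ne_zero
    (ENNReal.ofReal_pos.mpr (Real.rpow_pos_of_pos (by norm_num) _)).ne' (volB1_pos d k).ne'
  have ha2_T : a2 ≠ ⊤ := ENNReal.mul_ne_top ENNReal.ofReal_ne_top (volB1_ne_top d k)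
  have ha4_0 : a4 ≠ 0 := mul_ne_zero
    (ENNReal.ofReal_pos.mpr (Real.rpow_pos_of_pos (by norm_num) _)).ne' (volB1_pos d k).ne'
  have ha4_T : a4 ≠ ⊤ := ENNReal.mul_ne_top ENNReal.ofReal_ne_top (volB1_ne_top d k)
  set c2 : ℝ≥0∞ := a2⁻¹ with hc2
  set c4 : ℝ≥0∞ := a4⁻¹ with hc4
  have hc1T : c1 ≠ ⊤ := ENNReal.mul_ne_top ENNReal.ofReal_ne_top (volB1_ne_top d k)
  have hc2T : c2 ≠ ⊤ := ENNReal.inv_ne_top.mpr ha2_0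
  have hc4T : c4 ≠ ⊤ := ENNReal.inv_ne_top.mpr ha4_0
  have hfar_low' : ∀ (X : Esp d k) (r : ℝ), 0 < r → 2*r ≤ ‖tpart X‖ →
      ENNReal.ofReal (r ^ ((d+k:ℕ):ℝ) * ‖tpart X‖ ^ exx d k) ≤ c2 * mm d k (ball X r) :=
    fun X r hr h2 => inv_trick ha2_0 ha2_T (far_low d k hk1 X hr h2)
  have hnear_low' : ∀ (X : Esp d k) (r : ℝ), 0 < r → ‖tpart X‖ ≤ 2*r →
      ENNReal.ofReal (r ^ ((d:ℝ)+1)) ≤ c4 * mm d k (ball X r) :=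
    fun X r hr h2 => inv_trick ha4_0 ha4_T (near_low d k hk1 X hr h2)
  set K1 : ℝ≥0∞ := c3 * ENNReal.ofReal ((2:ℝ)^((d:ℝ)+1)) * c4 with hK1
  set K2 : ℝ≥0∞ := c3 * ENNReal.ofReal ((2:ℝ)^((d:ℝ)+1) * (4:ℝ)^(-exx d k)) * c2 with hK2
  set K3 : ℝ≥0∞ := c1 * ENNReal.ofReal ((2:ℝ)^((d+k:ℕ):ℝ)) * c2 with hK3
  have hK1T : K1 ≠ ⊤ := ENNReal.mul_ne_top
    (ENNReal.mul_ne_top hc3T ENNReal.ofReal_ne_top) hc4T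
  have hK2T : K2 ≠ ⊤ := ENNReal.mul_ne_top
    (ENNReal.mul_ne_top hc3T ENNReal.ofReal_ne_top) hc2T
  have hK3T : K3 ≠ ⊤ := ENNReal.mul_ne_top
    (ENNReal.mul_ne_top hc1T ENNReal.ofReal_ne_top) hc2T
  refine ⟨1 + c1 + c2 + c3 + c4 + K1 + K2 + K3, ?_, ?_, ?_⟩
  · exact le_add_right (le_add_right (le_add_right (le_add_right (le_add_right
      (le_add_right le_self_add)))))
  · refine ENNReal.add_ne_top.mpr ⟨?_, hK3T⟩
    refine ENNReal.add_ne_top.mpr ⟨?_, hK2T⟩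
    refine ENNReal.add_ne_top.mpr ⟨?_, hK1T⟩
    refine ENNReal.add_ne_top.mpr ⟨?_, hc4T⟩
    refine ENNReal.add_ne_top.mpr ⟨?_, hc3T⟩
    refine ENNReal.add_ne_top.mpr ⟨?_, hc2T⟩
    exact ENNReal.add_ne_top.mpr ⟨ENNReal.one_ne_top, hc1T⟩
  set C : ℝ≥0∞ := 1 + c1 + c2 + c3 + c4 + K1 + K2 + K3 with hC
  have hc1C : c1 ≤ C := le_add_right (le_add_right (le_add_right (le_add_right
    (le_add_right (le_add_right le_add_self)))))
  have hc2C : c2 ≤ C := le_add_right (le_add_right (le_add_right (le_add_right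
    (le_add_right le_add_self))))
  have hc3C : c3 ≤ C := le_add_right (le_add_right (le_add_right (le_add_right le_add_self)))
  have hc4C : c4 ≤ C := le_add_right (le_add_right (le_add_right le_add_self))
  have hK1C : K1 ≤ C := le_add_right (le_add_right le_add_self)
  have hK2C : K2 ≤ C := le_add_right le_add_self
  have hK3C : K3 ≤ C := le_add_self
  intro X r hr
  refine ⟨?_, ?_, ?_⟩
  · -- doubling
    by_cases hcase1 : ‖tpart X‖ ≤ 2*r
    · have hup := hnear X (2*r) (by linarith) (by linarith)
      have hlow := hnear_low' X r hr hcase1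
      have hsplit : ENNReal.ofReal ((2*r) ^ ((d:ℝ)+1))
          = ENNReal.ofReal ((2:ℝ)^((d:ℝ)+1)) * ENNReal.ofReal (r ^ ((d:ℝ)+1)) := by
        rw [← ENNReal.ofReal_mul (by positivity), ← Real.mul_rpow (by norm_num) hr.le]
      calc mm d k (ball X (2*r)) ≤ c3 * ENNReal.ofReal ((2*r) ^ ((d:ℝ)+1)) := hup
        _ = c3 * ENNReal.ofReal ((2:ℝ)^((d:ℝ)+1)) * ENNReal.ofReal (r ^ ((d:ℝ)+1)) := by
            rw [hsplit]; ring
        _ ≤ c3 * ENNReal.ofReal ((2:ℝ)^((d:ℝ)+1)) * (c4 * mm d k (ball X r)) :=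
            mul_le_mul_right hlow _
        _ = K1 * mm d k (ball X r) := by rw [hK1]; ring
        _ ≤ C * mm d k (ball X r) := mul_le_mul_left hK1C _
    · push_neg at hcase1
      by_cases hcase2 : ‖tpart X‖ ≤ 4*r
      · have hup := hnear X (2*r) (by linarith) (by linarith)
        have hlow := hfar_low' X r hr (by linarith)
        have hδ : (0:ℝ) < ‖tpart X‖ := by linarith
        have hreal : (2*r) ^ ((d:ℝ)+1)
            ≤ ((2:ℝ)^((d:ℝ)+1) * (4:ℝ)^(-exx d k))
              * (r ^ ((d+k:ℕ):ℝ) * ‖tpart X‖ ^ exx d k) := by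
          have e1 : (2*r:ℝ) ^ ((d:ℝ)+1) = 2^((d:ℝ)+1) * r^((d:ℝ)+1) :=
            Real.mul_rpow (by norm_num) hr.le
          have e2 : (r:ℝ) ^ ((d:ℝ)+1) = r ^ ((d+k:ℕ):ℝ) * r ^ exx d k := by
            rw [← exx_add d k, Real.rpow_add hr]
          have e3 : r ^ exx d k ≤ (4:ℝ)^(-exx d k) * ‖tpart X‖ ^ exx d k := by
            have h41 : (4*r:ℝ) ^ exx d k ≤ ‖tpart X‖ ^ exx d k :=
              Real.rpow_le_rpow_of_nonpos (by positivity) hcase2 (exx_nonpos d k hk1)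
            have h42 : (4*r:ℝ) ^ exx d k = 4^exx d k * r ^ exx d k :=
              Real.mul_rpow (by norm_num) hr.le
            have h43 : (4:ℝ)^(-exx d k) * (4:ℝ)^(exx d k) = 1 := by
              rw [← Real.rpow_add (by norm_num)]; simp
            calc r ^ exx d k = (4:ℝ)^(-exx d k) * ((4:ℝ)^exx d k * r ^ exx d k) := by
                  rw [← mul_assoc, h43, one_mul]
              _ ≤ (4:ℝ)^(-exx d k) * ‖tpart X‖ ^ exx d k := by
                  apply mul_le_mul_of_nonneg_left _ (by positivity)
                  rw [← h42]; exact h41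
          calc (2*r:ℝ)^((d:ℝ)+1) = 2^((d:ℝ)+1) * (r ^ ((d+k:ℕ):ℝ) * r ^ exx d k) := by
                rw [e1, e2]
            _ ≤ 2^((d:ℝ)+1) * (r ^ ((d+k:ℕ):ℝ) * ((4:ℝ)^(-exx d k) * ‖tpart X‖ ^ exx d k)) := by
                apply mul_le_mul_of_nonneg_left _ (by positivity)
                exact mul_le_mul_of_nonneg_left e3 (by positivity)
            _ = _ := by ring
        calc mm d k (ball X (2*r)) ≤ c3 * ENNReal.ofReal ((2*r) ^ ((d:ℝ)+1)) := hup
          _ ≤ c3 * ENNReal.ofReal (((2:ℝ)^((d:ℝ)+1) * (4:ℝ)^(-exx d k))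
                * (r ^ ((d+k:ℕ):ℝ) * ‖tpart X‖ ^ exx d k)) :=
              mul_le_mul_right (ENNReal.ofReal_le_ofReal hreal) _
          _ = c3 * ENNReal.ofReal ((2:ℝ)^((d:ℝ)+1) * (4:ℝ)^(-exx d k))
                * ENNReal.ofReal (r ^ ((d+k:ℕ):ℝ) * ‖tpart X‖ ^ exx d k) := by
              rw [ENNReal.ofReal_mul (by positivity)]; ring
          _ ≤ c3 * ENNReal.ofReal ((2:ℝ)^((d:ℝ)+1) * (4:ℝ)^(-exx d k))
                * (c2 * mm d k (ball X r)) := mul_le_mul_right hlow _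
          _ = K2 * mm d k (ball X r) := by rw [hK2]; ring
          _ ≤ C * mm d k (ball X r) := mul_le_mul_left hK2C _
      · push_neg at hcase2
        have hup := far_up d k hk1 X (by linarith : (0:ℝ) < 2*r)
          (by linarith : 2*(2*r) ≤ ‖tpart X‖)
        have hlow := hfar_low' X r hr (by linarith)
        have hδ : (0:ℝ) < ‖tpart X‖ := by linarith
        have hreal : (2*r:ℝ) ^ ((d+k:ℕ):ℝ) * ‖tpart X‖ ^ exx d k
            = (2:ℝ)^((d+k:ℕ):ℝ) * (r ^ ((d+k:ℕ):ℝ) * ‖tpart X‖ ^ exx d k) := by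
          rw [Real.mul_rpow (by norm_num) hr.le]; ring
        calc mm d k (ball X (2*r))
            ≤ c1 * ENNReal.ofReal ((2*r) ^ ((d+k:ℕ):ℝ) * ‖tpart X‖ ^ exx d k) := hup
          _ = c1 * ENNReal.ofReal ((2:ℝ)^((d+k:ℕ):ℝ))
                * ENNReal.ofReal (r ^ ((d+k:ℕ):ℝ) * ‖tpart X‖ ^ exx d k) := by
              rw [hreal, ENNReal.ofReal_mul (by positivity)]; ring
          _ ≤ c1 * ENNReal.ofReal ((2:ℝ)^((d+k:ℕ):ℝ)) * (c2 * mm d k (ball X r)) :=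
              mul_le_mul_right hlow _
          _ = K3 * mm d k (ball X r) := by rw [hK3]; ring
          _ ≤ C * mm d k (ball X r) := mul_le_mul_left hK3C _
  · intro h2
    constructor
    · exact le_trans (far_up d k hk1 X hr h2) (mul_le_mul_left hc1C _)
    · exact le_trans (hfar_low' X r hr h2) (mul_le_mul_left hc2C _)
  · intro h2
    constructor
    · exact le_trans (hnear X r hr h2) (mul_le_mul_left hc3C _)
    · exact le_trans (hnear_low' X r hr h2) (mul_le_mul_left hc4C _)
end
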